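/- For a threshold utility v ∈ 𝒰(ℝ), the following statements are equivalent: (a) for all X, Y ∈ 𝒳 and all m ∈ ℝ, X ≤_{v-SD} Y implies X + m ≤_{v-SD} Y + m; (b) for every Z ∈ 𝒳, the base risk measure ρ_{Z,v} is v-SD-consistent; (c) the absolute risk aversion R_v^A is constant on ℝ. -/

import Mathlib

open MeasureTheory Filter Set

noncomputable section

namespace Paper

variable {Ω : Type*} [MeasurableSpace Ω]

/-- The probability measure `P` is atomless. -/
def Atomless (P : Measure Ω) : Prop :=
  ∀ s : Set Ω, MeasurableSet s → 0 < P s →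
    ∃ t : Set Ω, MeasurableSet t ∧ t ⊆ s ∧ 0 < P t ∧ P t < P s

/-- `𝒳`: the essentially bounded random variables. -/
def MemX (P : Measure Ω) (X : Ω → ℝ) : Prop :=
  Measurable X ∧ ∃ C : ℝ, ∀ᵐ ω ∂P, |X ω| ≤ C

/-- `𝒰(I)`: twice differentiable functions with everywhere positive first
derivative on `I`. -/
def IsUtility (I : Set ℝ) (u : ℝ → ℝ) : Prop :=
  (∀ x ∈ I, DifferentiableAt ℝ u x) ∧
  (∀ x ∈ I, DifferentiableAt ℝ (deriv u) x) ∧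
  (∀ x ∈ I, 0 < deriv u x)

/-- Arrow–Pratt coefficient of absolute risk aversion. -/
def RA (u : ℝ → ℝ) (x : ℝ) : ℝ := -deriv (deriv u) x / deriv u x

/-- `𝓛¹_v`: `I`-valued random variables `X` with `v(X)` integrable. -/
def MemL1 (P : Measure Ω) (I : Set ℝ) (v : ℝ → ℝ) (X : Ω → ℝ) : Prop :=
  Measurable X ∧ (∀ᵐ ω ∂P, X ω ∈ I) ∧ Integrable (fun ω => v (X ω)) P

/-- The `v`-SD order: `X ≤_{v-SD} Y`. -/
def vSD (P : Measure Ω) (I : Set ℝ) (v : ℝ → ℝ) (X Y : Ω → ℝ) : Prop :=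
  ∀ u : ℝ → ℝ, IsUtility I u → (∀ x ∈ I, RA v x ≤ RA u x) →
    Integrable (fun ω => u (X ω)) P → Integrable (fun ω => u (Y ω)) P →
    ∫ ω, u (X ω) ∂P ≤ ∫ ω, u (Y ω) ∂P

/-- Second-order stochastic dominance. -/
def SSD (P : Measure Ω) (X Y : Ω → ℝ) : Prop :=
  ∀ u : ℝ → ℝ, IsUtility Set.univ u → ConcaveOn ℝ Set.univ u →
    Integrable (fun ω => u (X ω)) P → Integrable (fun ω => u (Y ω)) P →
    ∫ ω, u (X ω) ∂P ≤ ∫ ω, u (Y ω) ∂P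

/-- Monetary risk measure: antitone and cash-additive on `𝒳`. -/
def IsRiskMeasure (P : Measure Ω) (ρ : (Ω → ℝ) → ℝ) : Prop :=
  (∀ X Y : Ω → ℝ, MemX P X → MemX P Y → (∀ᵐ ω ∂P, X ω ≤ Y ω) → ρ Y ≤ ρ X) ∧
  (∀ X : Ω → ℝ, MemX P X → ∀ c : ℝ, ρ (fun ω => X ω + c) = ρ X - c)

/-- Worst-case risk measure `ρ^w(X) = ess sup (-X)`. -/
def rhoW (P : Measure Ω) (X : Ω → ℝ) : ℝ :=
  sInf {m : ℝ | ∀ᵐ ω ∂P, -X ω ≤ m}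

/-- `v`-SD-consistency of `φ` on the domain `D`. -/
def VSDConsistent (P : Measure Ω) (I : Set ℝ) (v : ℝ → ℝ)
    (D : Set (Ω → ℝ)) (φ : (Ω → ℝ) → ℝ) : Prop :=
  ∀ X Y : Ω → ℝ, X ∈ D → Y ∈ D → MemL1 P I v X → MemL1 P I v Y →
    vSD P I v X Y → φ Y ≤ φ X

/-- `𝒞`: the a.s. strictly positive bounded random variables. -/
def MemC (P : Measure Ω) (X : Ω → ℝ) : Prop :=
  MemX P X ∧ ∀ᵐ ω ∂P, 0 < X ω

/-- `𝓔 = {e^Y : Y ∈ 𝒳}` (up to a.s. equality). -/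
def MemE (P : Measure Ω) (X : Ω → ℝ) : Prop :=
  ∃ Y : Ω → ℝ, MemX P Y ∧ ∀ᵐ ω ∂P, X ω = Real.exp (Y ω)

/-- Return risk measure. -/
def IsRRM (P : Measure Ω) (η : (Ω → ℝ) → ℝ) : Prop :=
  (∀ X : Ω → ℝ, MemC P X → 0 < η X) ∧
  (∀ X Y : Ω → ℝ, MemC P X → MemC P Y → (∀ᵐ ω ∂P, X ω ≤ Y ω) → η Y ≤ η X) ∧
  (∀ X : Ω → ℝ, MemC P X → ∀ t : ℝ, 0 < t → η (fun ω => t * X ω) = t⁻¹ * η X)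

/-- Loss-based return risk measure. -/
def IsLossRRM (P : Measure Ω) (κ : (Ω → ℝ) → ℝ) : Prop :=
  (∀ L : Ω → ℝ, MemC P L → 0 < κ L) ∧
  (∀ L L' : Ω → ℝ, MemC P L → MemC P L' → (∀ᵐ ω ∂P, L' ω ≤ L ω) → κ L' ≤ κ L) ∧
  (∀ L : Ω → ℝ, MemC P L → ∀ t : ℝ, 0 < t → κ (fun ω => t * L ω) = t * κ L)

/-- Base risk measure `ρ_{Z,v}`. -/
def baseRM (P : Measure Ω) (v : ℝ → ℝ) (Z X : Ω → ℝ) : ℝ :=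
  sInf {m : ℝ | vSD P Set.univ v Z (fun ω => X ω + m)}

/-- Lower quantile function. -/
def qf (P : Measure Ω) (X : Ω → ℝ) (r : ℝ) : ℝ :=
  sInf {x : ℝ | r ≤ (P {ω | X ω ≤ x}).toReal}

/-- Expected Shortfall at level `p`. -/
def ES (P : Measure Ω) (p : ℝ) (X : Ω → ℝ) : ℝ :=
  if p < 1 then -(1 / (1 - p)) * ∫ r in (0:ℝ)..(1 - p), qf P X r
  else rhoW P X



open scoped Classical ENNReal

section Lemmas

section A
variable {u v : ℝ → ℝ}

lemma IsUtility.diff (hu : IsUtility univ u) (x : ℝ) : DifferentiableAt ℝ u x :=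
  hu.1 x trivial

lemma IsUtility.diff2 (hu : IsUtility univ u) (x : ℝ) : DifferentiableAt ℝ (deriv u) x :=
  hu.2.1 x trivial

lemma IsUtility.dpos (hu : IsUtility univ u) (x : ℝ) : 0 < deriv u x :=
  hu.2.2 x trivial

lemma IsUtility.cont (hu : IsUtility univ u) : Continuous u := by
  have : Differentiable ℝ u := fun x => hu.diff x
  exact this.continuous

lemma IsUtility.contD (hu : IsUtility univ u) : Continuous (deriv u) := by
  have : Differentiable ℝ (deriv u) := fun x => hu.diff2 x
  exact this.continuous

lemma IsUtility.mono (hu : IsUtility univ u) : StrictMono u :=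
  strictMono_of_deriv_pos hu.dpos

/-- The ratio `u'/v'` is antitone when `RA v ≤ RA u`. -/
lemma ratio_antitone (hu : IsUtility univ u) (hv : IsUtility univ v)
    (hR : ∀ x, RA v x ≤ RA u x) :
    Antitone (fun x => deriv u x / deriv v x) := by
  have hdiff : Differentiable ℝ (fun x => deriv u x / deriv v x) := fun x =>
    (hu.diff2 x).div (hv.diff2 x) (hv.dpos x).ne'
  refine antitone_of_deriv_nonpos hdiff fun x => ?_
  rw [deriv_fun_div (hu.diff2 x) (hv.diff2 x) (hv.dpos x).ne']
  have hnum : deriv (deriv u) x * deriv v x - deriv u x * deriv (deriv v) x ≤ 0 := by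
    have h := hR x
    unfold RA at h
    rw [div_le_div_iff₀ (hv.dpos x) (hu.dpos x)] at h
    nlinarith [hu.dpos x, hv.dpos x]
  exact div_nonpos_of_nonpos_of_nonneg hnum (sq_nonneg _)

lemma grad_bound_le (hu : IsUtility univ u) (hv : IsUtility univ v)
    (hR : ∀ x, RA v x ≤ RA u x) {x y : ℝ} (hxy : x ≤ y) :
    u y - u x ≤ deriv u x / deriv v x * (v y - v x) := by
  set r := fun t => deriv u t / deriv v t with hr
  have hrv : ∀ t, deriv u t = r t * deriv v t := fun t => by
    simp only [hr]; rw [div_mul_cancel₀ _ (hv.dpos t).ne']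
  have h1 : u y - u x = ∫ t in x..y, deriv u t := by
    rw [intervalIntegral.integral_deriv_eq_sub (fun t _ => hu.diff t)
      (hu.contD.intervalIntegrable _ _)]
  have h2 : v y - v x = ∫ t in x..y, deriv v t := by
    rw [intervalIntegral.integral_deriv_eq_sub (fun t _ => hv.diff t)
      (hv.contD.intervalIntegrable _ _)]
  rw [h1, h2, ← intervalIntegral.integral_const_mul]
  refine intervalIntegral.integral_mono_on hxy
    (hu.contD.intervalIntegrable _ _)
    ((continuous_const.mul hv.contD).intervalIntegrable _ _) fun t ht => ?_
  rw [hrv t]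
  have hran : r t ≤ r x := ratio_antitone hu hv hR ht.1
  nlinarith [hv.dpos t]

lemma grad_bound_ge (hu : IsUtility univ u) (hv : IsUtility univ v)
    (hR : ∀ x, RA v x ≤ RA u x) {x y : ℝ} (hxy : x ≤ y) :
    deriv u y / deriv v y * (v y - v x) ≤ u y - u x := by
  set r := fun t => deriv u t / deriv v t with hr
  have hrv : ∀ t, deriv u t = r t * deriv v t := fun t => by
    simp only [hr]; rw [div_mul_cancel₀ _ (hv.dpos t).ne']
  have h1 : u y - u x = ∫ t in x..y, deriv u t := by
    rw [intervalIntegral.integral_deriv_eq_sub (fun t _ => hu.diff t)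
      (hu.contD.intervalIntegrable _ _)]
  have h2 : v y - v x = ∫ t in x..y, deriv v t := by
    rw [intervalIntegral.integral_deriv_eq_sub (fun t _ => hv.diff t)
      (hv.contD.intervalIntegrable _ _)]
  rw [h1, h2, ← intervalIntegral.integral_const_mul]
  refine intervalIntegral.integral_mono_on hxy
    ((continuous_const.mul hv.contD).intervalIntegrable _ _)
    (hu.contD.intervalIntegrable _ _) fun t ht => ?_
  rw [hrv t]
  have hran : r y ≤ r t := ratio_antitone hu hv hR ht.2
  nlinarith [hv.dpos t]

/-- Key comparison lemma: `u x - u c ≤ r(c) (v x - v c)`. -/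
lemma key_pointwise (hu : IsUtility univ u) (hv : IsUtility univ v)
    (hR : ∀ x, RA v x ≤ RA u x) (c x : ℝ) :
    u x - u c ≤ deriv u c / deriv v c * (v x - v c) := by
  rcases le_total c x with h | h
  · exact grad_bound_le hu hv hR h
  · have := grad_bound_ge hu hv hR h
    nlinarith

/-- Key comparison lemma (Jensen-type, two points). -/
lemma key_lemma (hu : IsUtility univ u) (hv : IsUtility univ v)
    (hR : ∀ x, RA v x ≤ RA u x) {lam a b c : ℝ} (h0 : 0 ≤ lam) (h1 : lam ≤ 1)
    (hc : lam * v a + (1 - lam) * v b ≤ v c) :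
    lam * u a + (1 - lam) * u b ≤ u c := by
  have ha := key_pointwise hu hv hR c a
  have hb := key_pointwise hu hv hR c b
  have hrpos : 0 < deriv u c / deriv v c := div_pos (hu.dpos c) (hv.dpos c)
  nlinarith

end A


/-- bounded measurable composed with continuous is integrable -/
lemma integrable_comp {P : Measure Ω} [IsProbabilityMeasure P] {u : ℝ → ℝ}
    (hu : Continuous u) {X : Ω → ℝ} (hX : Measurable X) {C : ℝ}
    (hC : ∀ᵐ ω ∂P, |X ω| ≤ C) : Integrable (fun ω => u (X ω)) P := by
  obtain ⟨M, hM⟩ := (isCompact_Icc (a := -C) (b := C)).exists_bound_of_continuousOn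
    hu.continuousOn
  refine ⟨(hu.measurable.comp hX).aestronglyMeasurable, ?_⟩
  refine HasFiniteIntegral.of_bounded (C := M) ?_
  filter_upwards [hC] with ω hω
  exact hM _ (abs_le.mp hω)

lemma MemX.integrable_comp' {P : Measure Ω} [IsProbabilityMeasure P] {u : ℝ → ℝ}
    (hu : Continuous u) {X : Ω → ℝ} (hX : MemX P X) :
    Integrable (fun ω => u (X ω)) P := by
  obtain ⟨C, hC⟩ := hX.2
  exact integrable_comp hu hX.1 hC

/-- expectation of a two-point random variable -/
lemma integral_two_point {P : Measure Ω} [IsProbabilityMeasure P] {s : Set Ω}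
    (hs : MeasurableSet s) (a b : ℝ) (u : ℝ → ℝ) :
    ∫ ω, u (s.piecewise (fun _ => a) (fun _ => b) ω) ∂P
      = (P s).toReal * u a + (1 - (P s).toReal) * u b := by
  have h : (fun ω => u (s.piecewise (fun _ => a) (fun _ => b) ω))
      = fun ω => s.indicator (fun _ => u a - u b) ω + u b := by
    funext ω
    by_cases hω : ω ∈ s <;> simp [Set.piecewise, Set.indicator, hω]
  rw [h]
  rw [integral_add ((integrable_const (u a - u b)).indicator hs) (integrable_const _)]
  rw [integral_indicator hs, setIntegral_const, integral_const]
  simp [measure_univ, Measure.real]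
  ring

section C
variable {P : Measure Ω} [IsProbabilityMeasure P] {v : ℝ → ℝ}

lemma vSD_refl (X : Ω → ℝ) : vSD P Set.univ v X X :=
  fun _ _ _ _ _ => le_rfl

lemma vSD_of_ae_le {X Y : Ω → ℝ} (h : ∀ᵐ ω ∂P, X ω ≤ Y ω) :
    vSD P Set.univ v X Y := by
  intro u hu _ hiX hiY
  refine integral_mono_ae hiX hiY ?_
  filter_upwards [h] with ω hω
  exact (hu.mono.monotone hω)

lemma vSD_trans_bounded {Z X Y : Ω → ℝ} (hX : MemX P X)
    (h1 : vSD P Set.univ v Z X) (h2 : vSD P Set.univ v X Y) :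
    vSD P Set.univ v Z Y := by
  intro u hu hR hiZ hiY
  obtain ⟨C, hC⟩ := hX.2
  have hiX : Integrable (fun ω => u (X ω)) P := integrable_comp hu.cont hX.1 hC
  exact le_trans (h1 u hu hR hiZ hiX) (h2 u hu hR hiX hiY)

/-- The defining set of `baseRM` is nonempty for bounded `Z`, `X`. -/
lemma baseRM_set_nonempty {Z X : Ω → ℝ} (hZ : MemX P Z) (hX : MemX P X) :
    {m : ℝ | vSD P Set.univ v Z (fun ω => X ω + m)}.Nonempty := by
  obtain ⟨CZ, hCZ⟩ := hZ.2
  obtain ⟨CX, hCX⟩ := hX.2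
  refine ⟨CZ + CX, vSD_of_ae_le ?_⟩
  filter_upwards [hCZ, hCX] with ω h1 h2
  have := abs_le.mp h1
  have := abs_le.mp h2
  linarith [this.1]

lemma baseRM_set_bddBelow (hv : IsUtility univ v) {Z X : Ω → ℝ}
    (hZ : MemX P Z) (hX : MemX P X) :
    BddBelow {m : ℝ | vSD P Set.univ v Z (fun ω => X ω + m)} := by
  obtain ⟨CZ, hCZ⟩ := hZ.2
  obtain ⟨CX, hCX⟩ := hX.2
  refine ⟨-CZ - CX, fun m hm => ?_⟩
  have hiZ : Integrable (fun ω => v (Z ω)) P := integrable_comp hv.cont hZ.1 hCZ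
  have hXm : ∀ᵐ ω ∂P, |X ω + m| ≤ CX + |m| := by
    filter_upwards [hCX] with ω h
    calc |X ω + m| ≤ |X ω| + |m| := abs_add_le _ _
    _ ≤ CX + |m| := by linarith
  have hiXm : Integrable (fun ω => v (X ω + m)) P := by
    have := integrable_comp (P := P) hv.cont (hX.1.add_const m) hXm
    exact this
  have key := hm v hv (fun x _ => le_rfl) hiZ hiXm
  have h1 : v (-CZ) ≤ ∫ ω, v (Z ω) ∂P := by
    have : ∫ ω, v (-CZ) ∂P ≤ ∫ ω, v (Z ω) ∂P := by
      refine integral_mono_ae (integrable_const _) hiZ ?_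
      filter_upwards [hCZ] with ω h
      exact hv.mono.monotone (by linarith [(abs_le.mp h).1])
    simpa using this
  have h2 : ∫ ω, v (X ω + m) ∂P ≤ v (CX + m) := by
    have : ∫ ω, v (X ω + m) ∂P ≤ ∫ ω, v (CX + m) ∂P := by
      refine integral_mono_ae hiXm (integrable_const _) ?_
      filter_upwards [hCX] with ω h
      exact hv.mono.monotone (by linarith [(abs_le.mp h).2])
    simpa using this
  have : v (-CZ) ≤ v (CX + m) := le_trans h1 (le_trans key h2)
  have := hv.mono.le_iff_le.mp this
  linarith

end C


/-- Abstract density engine: a set containing two points, closed under the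
`lam`-combination operation and its two inverses (within the open "interval"
`J`), is dense in `J`. -/
lemma density_engine {S J : Set ℝ} {p q lam : ℝ} (hpq : p < q)
    (hl0 : 0 < lam) (hl1 : lam < 1)
    (hSJ : S ⊆ J) (hp : p ∈ S) (hq : q ∈ S)
    (hJoc : ∀ s ∈ J, ∀ t ∈ J, ∀ y, s ≤ y → y ≤ t → y ∈ J)
    (hJopen : IsOpen J)
    (hmid : ∀ s ∈ S, ∀ t ∈ S, lam * s + (1 - lam) * t ∈ S)
    (hrefl1 : ∀ s ∈ S, ∀ t ∈ S, ∀ y ∈ J, lam * s + (1 - lam) * y = t → y ∈ S)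
    (hrefl2 : ∀ s ∈ S, ∀ t ∈ S, ∀ y ∈ J, lam * y + (1 - lam) * t = s → y ∈ S) :
    J ⊆ closure S := by
  set d := q - p with hd
  have hdpos : 0 < d := by simp [hd]; linarith
  set μ := max lam (1 - lam) with hμ
  have hμpos : 0 < μ := lt_of_lt_of_le hl0 (le_max_left _ _)
  have hμlt : μ < 1 := max_lt (by linarith) (by linarith)
  have hne : (1:ℝ) - lam ≠ 0 := by linarith
  have hμhalf : (2:ℝ)⁻¹ ≤ μ := by
    rcases le_total lam (1 - lam) with h | h
    · calc (2:ℝ)⁻¹ ≤ 1 - lam := by linarith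
        _ ≤ μ := le_max_right _ _
    · calc (2:ℝ)⁻¹ ≤ lam := by linarith
        _ ≤ μ := le_max_left _ _
  have hCp : ∀ s ∈ S, μ * s + (1 - μ) * p ∈ S := by
    intro s hs
    rcases max_choice lam (1 - lam) with h | h
    · have : μ * s + (1 - μ) * p = lam * s + (1 - lam) * p := by rw [hμ, h]
      rw [this]; exact hmid s hs p hp
    · have : μ * s + (1 - μ) * p = lam * p + (1 - lam) * s := by rw [hμ, h]; ring
      rw [this]; exact hmid p hp s hs
  have hCq : ∀ s ∈ S, μ * s + (1 - μ) * q ∈ S := by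
    intro s hs
    rcases max_choice lam (1 - lam) with h | h
    · have : μ * s + (1 - μ) * q = lam * s + (1 - lam) * q := by rw [hμ, h]
      rw [this]; exact hmid s hs q hq
    · have : μ * s + (1 - μ) * q = lam * q + (1 - lam) * s := by rw [hμ, h]; ring
      rw [this]; exact hmid q hq s hs
  have step1 : ∀ n : ℕ, ∀ x ∈ Icc p q, ∃ s ∈ S, |x - s| ≤ μ ^ n * d := by
    intro n
    induction n with
    | zero =>
      intro x hx
      refine ⟨p, hp, ?_⟩
      rw [abs_of_nonneg (by linarith [hx.1])]
      simp only [pow_zero, one_mul, hd]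
      linarith [hx.2]
    | succ n ih =>
      intro x hx
      by_cases hcase : x ≤ p + μ * d
      · set y := p + (x - p) / μ with hy
        have hyI : y ∈ Icc p q := by
          constructor
          · have : 0 ≤ (x - p) / μ := div_nonneg (by linarith [hx.1]) hμpos.le
            rw [hy]; linarith
          · have : (x - p) / μ ≤ d := by
              rw [div_le_iff₀ hμpos]; nlinarith
            rw [hy]; simp only [hd] at this; linarith
        obtain ⟨s, hs, hds⟩ := ih y hyI
        refine ⟨μ * s + (1 - μ) * p, hCp s hs, ?_⟩
        have hxy : x = μ * y + (1 - μ) * p := by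
          rw [hy]; field_simp; ring
        have : x - (μ * s + (1 - μ) * p) = μ * (y - s) := by rw [hxy]; ring
        rw [this, abs_mul, abs_of_nonneg hμpos.le, pow_succ, mul_comm (μ ^ n) μ,
          mul_assoc]
        exact mul_le_mul_of_nonneg_left hds hμpos.le
      · push_neg at hcase
        set y := q + (x - q) / μ with hy
        have hyI : y ∈ Icc p q := by
          constructor
          · have : p - q ≤ (x - q) / μ := by
              rw [le_div_iff₀ hμpos]
              nlinarith [hx.2]
            rw [hy]; linarith
          · have : (x - q) / μ ≤ 0 :=
              div_nonpos_of_nonpos_of_nonneg (by linarith [hx.2]) hμpos.le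
            rw [hy]; linarith
        obtain ⟨s, hs, hds⟩ := ih y hyI
        refine ⟨μ * s + (1 - μ) * q, hCq s hs, ?_⟩
        have hxy : x = μ * y + (1 - μ) * q := by
          rw [hy]; field_simp; ring
        have : x - (μ * s + (1 - μ) * q) = μ * (y - s) := by rw [hxy]; ring
        rw [this, abs_mul, abs_of_nonneg hμpos.le, pow_succ, mul_comm (μ ^ n) μ,
          mul_assoc]
        exact mul_le_mul_of_nonneg_left hds hμpos.le
  have densIcc : ∀ x ∈ Icc p q, x ∈ closure S := by
    intro x hx
    rw [Metric.mem_closure_iff]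
    intro ε hε
    obtain ⟨n, hn⟩ := exists_pow_lt_of_lt_one (div_pos hε hdpos) hμlt
    obtain ⟨s, hs, hds⟩ := step1 n x hx
    refine ⟨s, hs, ?_⟩
    rw [Real.dist_eq]
    calc |x - s| ≤ μ ^ n * d := hds
      _ < ε / d * d := by exact mul_lt_mul_of_pos_right hn hdpos
      _ = ε := by field_simp
  have hpJ : p ∈ J := hSJ hp
  have hqJ : q ∈ J := hSJ hq
  -- going up from `q`
  have up : ∀ n : ℕ, ∀ x ∈ J, p ≤ x → x ≤ p + d / (1 - lam) ^ n → x ∈ closure S := by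
    intro n
    induction n with
    | zero =>
      intro x hxJ h1 h2
      exact densIcc x ⟨h1, by simpa [hd] using h2⟩
    | succ n ih =>
      intro x hxJ h1 h2
      set z := lam * p + (1 - lam) * x with hz
      have hzx : z ≤ x := by nlinarith
      have hzp : p ≤ z := by nlinarith
      have hzJ : z ∈ J := hJoc p hpJ x hxJ z hzp (by linarith)
      have hzb : z ≤ p + d / (1 - lam) ^ n := by
        have h3 : z - p = (1 - lam) * (x - p) := by rw [hz]; ring
        have h4 : x - p ≤ d / (1 - lam) ^ (n + 1) := by linarith
        have h5 : (1 - lam) * (x - p) ≤ (1 - lam) * (d / (1 - lam) ^ (n + 1)) :=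
          mul_le_mul_of_nonneg_left h4 (by linarith)
        have h6 : (1 - lam) * (d / (1 - lam) ^ (n + 1)) = d / (1 - lam) ^ n := by
          rw [pow_succ, ← div_div, mul_comm, div_mul_cancel₀ _ hne]
        linarith
      have hzcl : z ∈ closure S := ih z hzJ hzp hzb
      rw [Metric.mem_closure_iff]
      intro ε hε
      obtain ⟨δ, hδ, hball⟩ := Metric.isOpen_iff.mp hJopen x hxJ
      set ε' := min ε δ with hε'
      have hε'pos : 0 < ε' := lt_min hε hδ
      rw [Metric.mem_closure_iff] at hzcl
      obtain ⟨s, hs, hdist⟩ := hzcl ((1 - lam) * ε') (by nlinarith)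
      set y := (s - lam * p) / (1 - lam) with hy
      have hkey : lam * p + (1 - lam) * y = s := by
        rw [hy, mul_comm ((1:ℝ) - lam), div_mul_cancel₀ _ hne]; ring
      have e1 : (1 - lam) * y = s - lam * p := by
        rw [hy, mul_comm, div_mul_cancel₀ _ hne]
      have e2 : (1 - lam) * (x - y) = z - s := by
        rw [mul_sub, e1, hz]; ring
      have hdist2 : |x - y| < ε' := by
        have e3 : (1 - lam) * |x - y| < (1 - lam) * ε' := by
          rw [Real.dist_eq] at hdist
          calc (1 - lam) * |x - y|
              = |(1 - lam) * (x - y)| := by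
                rw [abs_mul, abs_of_pos (by linarith : (0:ℝ) < 1 - lam)]
            _ = |z - s| := by rw [e2]
            _ < (1 - lam) * ε' := hdist
        exact lt_of_mul_lt_mul_left e3 (by linarith)
      have hyJ : y ∈ J := by
        apply hball
        rw [Metric.mem_ball, Real.dist_eq]
        exact lt_of_lt_of_le (by rw [abs_sub_comm] at hdist2; exact hdist2)
          (min_le_right _ _)
      refine ⟨y, hrefl1 p hp s hs y hyJ hkey, ?_⟩
      rw [Real.dist_eq]
      exact lt_of_lt_of_le hdist2 (min_le_left _ _)
  -- going down from `p`
  have down : ∀ n : ℕ, ∀ x ∈ J, x ≤ q → q - d / lam ^ n ≤ x → x ∈ closure S := by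
    intro n
    induction n with
    | zero =>
      intro x hxJ h1 h2
      exact densIcc x ⟨by simpa [hd] using h2, h1⟩
    | succ n ih =>
      intro x hxJ h1 h2
      set z := lam * x + (1 - lam) * q with hz
      have hzx : x ≤ z := by nlinarith
      have hzq : z ≤ q := by nlinarith
      have hzJ : z ∈ J := hJoc x hxJ q hqJ z hzx hzq
      have hzb : q - d / lam ^ n ≤ z := by
        have h3 : q - z = lam * (q - x) := by rw [hz]; ring
        have h4 : q - x ≤ d / lam ^ (n + 1) := by linarith
        have h5 : lam * (q - x) ≤ lam * (d / lam ^ (n + 1)) :=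
          mul_le_mul_of_nonneg_left h4 hl0.le
        have h6 : lam * (d / lam ^ (n + 1)) = d / lam ^ n := by
          rw [pow_succ, ← div_div, mul_comm, div_mul_cancel₀ _ hl0.ne']
        linarith
      have hzcl : z ∈ closure S := ih z hzJ hzq hzb
      rw [Metric.mem_closure_iff]
      intro ε hε
      obtain ⟨δ, hδ, hball⟩ := Metric.isOpen_iff.mp hJopen x hxJ
      set ε' := min ε δ with hε'
      have hε'pos : 0 < ε' := lt_min hε hδ
      rw [Metric.mem_closure_iff] at hzcl
      obtain ⟨s, hs, hdist⟩ := hzcl (lam * ε') (by nlinarith)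
      set y := (s - (1 - lam) * q) / lam with hy
      have hkey : lam * y + (1 - lam) * q = s := by
        rw [hy, mul_comm lam, div_mul_cancel₀ _ hl0.ne']; ring
      have e1 : lam * y = s - (1 - lam) * q := by
        rw [hy, mul_comm, div_mul_cancel₀ _ hl0.ne']
      have e2 : lam * (x - y) = z - s := by
        rw [mul_sub, e1, hz]; ring
      have hdist2 : |x - y| < ε' := by
        have e3 : lam * |x - y| < lam * ε' := by
          rw [Real.dist_eq] at hdist
          calc lam * |x - y|
              = |lam * (x - y)| := by rw [abs_mul, abs_of_pos hl0]
            _ = |z - s| := by rw [e2]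
            _ < lam * ε' := hdist
        exact lt_of_mul_lt_mul_left e3 hl0.le
      have hyJ : y ∈ J := by
        apply hball
        rw [Metric.mem_ball, Real.dist_eq]
        exact lt_of_lt_of_le (by rw [abs_sub_comm] at hdist2; exact hdist2)
          (min_le_right _ _)
      refine ⟨y, hrefl2 s hs q hq y hyJ hkey, ?_⟩
      rw [Real.dist_eq]
      exact lt_of_lt_of_le hdist2 (min_le_left _ _)
  -- conclusion
  intro x hxJ
  rcases le_total p x with h | h
  · have h1lam : (1:ℝ) < (1 - lam)⁻¹ := (one_lt_inv₀ (by linarith)).mpr (by linarith)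
    obtain ⟨n, hn⟩ := pow_unbounded_of_one_lt ((x - p) / d) h1lam
    refine up n x hxJ h ?_
    rw [div_lt_iff₀ hdpos] at hn
    have : ((1 - lam)⁻¹) ^ n * d = d / (1 - lam) ^ n := by
      rw [inv_pow, inv_mul_eq_div]
    nlinarith [this]
  · have h1lam : (1:ℝ) < lam⁻¹ := (one_lt_inv₀ hl0).mpr (by linarith)
    obtain ⟨n, hn⟩ := pow_unbounded_of_one_lt ((q - x) / d) h1lam
    refine down n x hxJ (by linarith) ?_
    rw [div_lt_iff₀ hdpos] at hn
    have : (lam⁻¹) ^ n * d = d / lam ^ n := by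
      rw [inv_pow, inv_mul_eq_div]
    nlinarith [this]


section E
variable {v : ℝ → ℝ}

lemma range_ordconn (hv : IsUtility univ v) :
    ∀ s ∈ range v, ∀ t ∈ range v, ∀ y, s ≤ y → y ≤ t → y ∈ range v := by
  rintro s ⟨a, rfl⟩ t ⟨b, rfl⟩ y h1 h2
  have hab : a ≤ b := by
    by_contra hab
    push_neg at hab
    have := hv.mono hab
    linarith
  have := intermediate_value_Icc hab hv.cont.continuousOn (⟨h1, h2⟩ : y ∈ Icc (v a) (v b))
  obtain ⟨c, _, hc⟩ := this
  exact ⟨c, hc⟩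

lemma range_open (hv : IsUtility univ v) : IsOpen (range v) := by
  rw [isOpen_iff_forall_mem_open]
  rintro y ⟨x, rfl⟩
  refine ⟨Ioo (v (x - 1)) (v (x + 1)), ?_, isOpen_Ioo, ?_⟩
  · intro z hz
    exact range_ordconn hv _ ⟨x - 1, rfl⟩ _ ⟨x + 1, rfl⟩ z hz.1.le hz.2.le
  · exact ⟨hv.mono (by linarith), hv.mono (by linarith)⟩

/-- combination preimage via IVT -/
lemma comb_preimage (hv : IsUtility univ v) {lam : ℝ} (h0 : 0 ≤ lam) (h1 : lam ≤ 1)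
    (a b : ℝ) : ∃ c, v c = lam * v a + (1 - lam) * v b := by
  rcases le_total a b with hab | hab
  · have hmem : lam * v a + (1 - lam) * v b ∈ Icc (v a) (v b) := by
      have hvab : v a ≤ v b := hv.mono.monotone hab
      constructor <;> nlinarith
    obtain ⟨c, _, hc⟩ := intermediate_value_Icc hab hv.cont.continuousOn hmem
    exact ⟨c, hc⟩
  · have hmem : lam * v a + (1 - lam) * v b ∈ Icc (v b) (v a) := by
      have hvab : v b ≤ v a := hv.mono.monotone hab
      constructor <;> nlinarith
    obtain ⟨c, _, hc⟩ := intermediate_value_Icc hab hv.cont.continuousOn hmem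
    exact ⟨c, hc⟩

/-- From the translation inequality, the equality version. -/
lemma trans_eq (hv : IsUtility univ v) {lam : ℝ} (h0 : 0 < lam) (h1 : lam < 1)
    (H : ∀ a b c m : ℝ, v c = lam * v a + (1 - lam) * v b →
      lam * v (a + m) + (1 - lam) * v (b + m) ≤ v (c + m)) :
    ∀ a b c m : ℝ, v c = lam * v a + (1 - lam) * v b →
      v (c + m) = lam * v (a + m) + (1 - lam) * v (b + m) := by
  intro a b c m hc
  refine le_antisymm ?_ (H a b c m hc)
  obtain ⟨c', hc'⟩ := comb_preimage hv h0.le h1.le (a + m) (b + m)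
  have h3 : v c ≤ v (c' + -m) := by
    have := H (a + m) (b + m) c' (-m) hc'
    simp only [add_neg_cancel_right] at this
    linarith [hc ▸ this]
  have h4 : c ≤ c' + -m := by
    by_contra hcon
    push_neg at hcon
    exact absurd h3 (not_le.mpr (hv.mono hcon))
  have h5 : c + m ≤ c' := by linarith
  calc v (c + m) ≤ v c' := hv.mono.monotone h5
    _ = lam * v (a + m) + (1 - lam) * v (b + m) := hc'

/-- Derivative identity. -/
lemma deriv_identity (hv : IsUtility univ v) {lam : ℝ} (h0 : 0 < lam) (h1 : lam < 1)
    (H : ∀ a b c m : ℝ, v c = lam * v a + (1 - lam) * v b →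
      v (c + m) = lam * v (a + m) + (1 - lam) * v (b + m)) :
    ∀ a b c : ℝ, v c = lam * v a + (1 - lam) * v b →
      deriv v c = lam * deriv v a + (1 - lam) * deriv v b := by
  intro a b c hc
  have hF : HasDerivAt (fun m : ℝ => v (c + m)) (deriv v c) 0 := by
    have h := ((hv.diff (c + 0)).hasDerivAt).comp 0
      ((hasDerivAt_id (0:ℝ)).const_add c)
    simpa [Function.comp_def] using h
  have hG : HasDerivAt (fun m : ℝ => lam * v (a + m) + (1 - lam) * v (b + m))
      (lam * deriv v a + (1 - lam) * deriv v b) 0 := by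
    have ha := ((hv.diff (a + 0)).hasDerivAt).comp 0
      ((hasDerivAt_id (0:ℝ)).const_add a)
    have hb := ((hv.diff (b + 0)).hasDerivAt).comp 0
      ((hasDerivAt_id (0:ℝ)).const_add b)
    simp only [add_zero, mul_one] at ha hb
    exact (ha.const_mul lam).add (hb.const_mul (1 - lam))
  have hFG : (fun m : ℝ => v (c + m)) = fun m => lam * v (a + m) + (1 - lam) * v (b + m) :=
    funext fun m => H a b c m hc
  have := hF.deriv
  rw [hFG] at this
  rw [← this, hG.deriv]

/-- The Pratt-type lemma: translation-invariance of certainty equivalents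
forces constant absolute risk aversion. -/
lemma pratt (hv : IsUtility univ v) {lam : ℝ} (h0 : 0 < lam) (h1 : lam < 1)
    (H : ∀ a b c m : ℝ, v c = lam * v a + (1 - lam) * v b →
      lam * v (a + m) + (1 - lam) * v (b + m) ≤ v (c + m)) :
    ∃ k : ℝ, ∀ x : ℝ, RA v x = k := by
  have hD := deriv_identity hv h0 h1 (trans_eq hv h0 h1 H)
  have hv01 : v 0 < v 1 := hv.mono (by norm_num)
  set α := (deriv v 1 - deriv v 0) / (v 1 - v 0) with hα
  set β := deriv v 0 - α * v 0 with hβ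
  set w := fun x => deriv v x - (α * v x + β) with hw
  have hw0 : w 0 = 0 := by simp [hw, hβ]
  have hne01 : v 1 - v 0 ≠ 0 := sub_ne_zero.mpr hv01.ne'
  have hαval : α * (v 1 - v 0) = deriv v 1 - deriv v 0 := by
    rw [hα, div_mul_cancel₀ _ hne01]
  have hw1 : w 1 = 0 := by
    simp only [hw, hβ]
    linear_combination -hαval
  have hkey : ∀ a b c : ℝ, v c = lam * v a + (1 - lam) * v b →
      w c = lam * w a + (1 - lam) * w b := by
    intro a b c hc
    simp only [hw]
    rw [hD a b c hc, hc]
    ring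
  -- the set where w vanishes
  set T := {x : ℝ | w x = 0} with hT
  have hwcont : Continuous w := by
    have : Differentiable ℝ (deriv v) := fun x => hv.diff2 x
    exact (this.continuous).sub ((continuous_const.mul hv.cont).add continuous_const)
  have hTclosed : IsClosed T := isClosed_eq hwcont continuous_const
  set S := v '' T with hS
  set J := range v with hJ
  have hJS : S ⊆ J := fun s ⟨x, _, hx⟩ => ⟨x, hx⟩
  have hmid : ∀ s ∈ S, ∀ t ∈ S, lam * s + (1 - lam) * t ∈ S := by
    rintro s ⟨a, ha, rfl⟩ t ⟨b, hb, rfl⟩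
    obtain ⟨c, hc⟩ := comb_preimage hv h0.le h1.le a b
    refine ⟨c, ?_, hc⟩
    show w c = 0
    rw [hkey a b c hc, ha, hb]
    ring
  have hrefl1 : ∀ s ∈ S, ∀ t ∈ S, ∀ y ∈ J, lam * s + (1 - lam) * y = t → y ∈ S := by
    rintro s ⟨a, ha, rfl⟩ t ⟨c, hc, rfl⟩ y ⟨b, rfl⟩ hy
    refine ⟨b, ?_, rfl⟩
    show w b = 0
    have := hkey a b c hy.symm
    rw [ha, hc] at this
    have h1lam : (1:ℝ) - lam ≠ 0 := by linarith
    field_simp at this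
    rcases mul_eq_zero.mp (by linarith : (1 - lam) * w b = 0) with h | h
    · exact absurd h h1lam
    · exact h
  have hrefl2 : ∀ s ∈ S, ∀ t ∈ S, ∀ y ∈ J, lam * y + (1 - lam) * t = s → y ∈ S := by
    rintro s ⟨c, hc, rfl⟩ t ⟨b, hb, rfl⟩ y ⟨a, rfl⟩ hy
    refine ⟨a, ?_, rfl⟩
    show w a = 0
    have := hkey a b c hy.symm
    rw [hb, hc] at this
    have : lam * w a = 0 := by linarith
    rcases mul_eq_zero.mp this with h | h
    · exact absurd h h0.ne'
    · exact h
  have hp : v 0 ∈ S := ⟨0, hw0, rfl⟩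
  have hq : v 1 ∈ S := ⟨1, hw1, rfl⟩
  have hdense := density_engine hv01 h0 h1 hJS hp hq (range_ordconn hv)
    (range_open hv) hmid hrefl1 hrefl2
  -- T is dense
  have hTall : ∀ x : ℝ, x ∈ T := by
    intro x
    have hxcl : x ∈ closure T := by
      rw [Metric.mem_closure_iff]
      intro ε hε
      have hlow : v (x - ε) < v x := hv.mono (by linarith)
      have hhigh : v x < v (x + ε) := hv.mono (by linarith)
      have hvx : v x ∈ closure S := hdense ⟨x, rfl⟩
      rw [Metric.mem_closure_iff] at hvx
      obtain ⟨s, hs, hds⟩ := hvx (min (v x - v (x - ε)) (v (x + ε) - v x))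
        (lt_min (by linarith) (by linarith))
      obtain ⟨a, haT, rfl⟩ := hs
      refine ⟨a, haT, ?_⟩
      rw [Real.dist_eq] at hds ⊢
      have h2 : |v x - v a| < min (v x - v (x - ε)) (v (x + ε) - v x) := hds
      have h3 : v (x - ε) < v a := by
        have := abs_lt.mp h2
        have := min_le_left (v x - v (x - ε)) (v (x + ε) - v x)
        linarith [abs_lt.mp h2 |>.2]
      have h4 : v a < v (x + ε) := by
        linarith [abs_lt.mp h2 |>.1, min_le_right (v x - v (x - ε)) (v (x + ε) - v x)]
      have h5 : x - ε < a := by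
        by_contra hcon
        push_neg at hcon
        exact absurd h3 (not_lt.mpr (hv.mono.monotone hcon))
      have h6 : a < x + ε := by
        by_contra hcon
        push_neg at hcon
        exact absurd h4 (not_lt.mpr (hv.mono.monotone hcon))
      rw [abs_lt]
      constructor <;> linarith
    rwa [hTclosed.closure_eq] at hxcl
  -- conclude: deriv v = α v + β everywhere
  have hderiv : ∀ x, deriv v x = α * v x + β := by
    intro x
    have := hTall x
    simp only [hT, mem_setOf_eq, hw] at this
    linarith
  refine ⟨-α, fun x => ?_⟩
  have hd2 : deriv (deriv v) x = α * deriv v x := by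
    have hfun : deriv v = fun x => α * v x + β := funext hderiv
    have h1' : deriv (fun y => α * v y + β) x = α * deriv v x :=
      ((((hv.diff x).hasDerivAt).const_mul α).add_const β).deriv
    conv_lhs => rw [hfun]
    exact h1'
  rw [RA, hd2]
  field_simp [(hv.dpos x).ne']

end E


section F
variable {Ω : Type*} [MeasurableSpace Ω] {P : Measure Ω} [IsProbabilityMeasure P] {v : ℝ → ℝ}
/-- translated utility -/
lemma IsUtility.translate {u : ℝ → ℝ} (hu : IsUtility univ u) (m : ℝ) :
    IsUtility univ (fun x => u (x + m)) := by
  have hder : ∀ x, deriv (fun y => u (y + m)) x = deriv u (x + m) := fun x =>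
    deriv_comp_add_const u m x
  refine ⟨fun x _ => ?_, fun x _ => ?_, fun x _ => ?_⟩
  · exact (hu.diff (x + m)).comp x (differentiableAt_id.add_const m)
  · have : (deriv fun y => u (y + m)) = fun x => deriv u (x + m) := funext hder
    rw [this]
    exact (hu.diff2 (x + m)).comp x (differentiableAt_id.add_const m)
  · rw [hder x]; exact hu.dpos (x + m)

lemma RA_translate {u : ℝ → ℝ} (hu : IsUtility univ u) (m x : ℝ) :
    RA (fun y => u (y + m)) x = RA u (x + m) := by
  have hder : (deriv fun y => u (y + m)) = fun x => deriv u (x + m) :=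
    funext fun x => deriv_comp_add_const u m x
  rw [RA, RA, hder]
  rw [show (deriv fun x => deriv u (x + m)) x = deriv (deriv u) (x + m) from
    deriv_comp_add_const (deriv u) m x]

/-- (c) → (a) -/
lemma CtoA (hv : IsUtility univ v) (hC : ∃ k : ℝ, ∀ x : ℝ, RA v x = k) :
    ∀ X Y : Ω → ℝ, MemX P X → MemX P Y → ∀ m : ℝ,
      vSD P Set.univ v X Y →
        vSD P Set.univ v (fun ω => X ω + m) (fun ω => Y ω + m) := by
  obtain ⟨k, hk⟩ := hC
  intro X Y _ _ m hXY u hu hR hiX hiY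
  have hum : IsUtility univ (fun x => u (x + m)) := hu.translate m
  have hRm : ∀ x ∈ univ, RA v x ≤ RA (fun y => u (y + m)) x := by
    intro x _
    rw [RA_translate hu m x, hk x, ← hk (x + m)]
    exact hR (x + m) trivial
  exact hXY (fun x => u (x + m)) hum hRm hiX hiY

/-- (a) → (b) -/
lemma AtoB (hv : IsUtility univ v)
    (hA : ∀ X Y : Ω → ℝ, MemX P X → MemX P Y → ∀ m : ℝ,
      vSD P Set.univ v X Y →
        vSD P Set.univ v (fun ω => X ω + m) (fun ω => Y ω + m)) :
    ∀ Z : Ω → ℝ, MemX P Z →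
      VSDConsistent P Set.univ v {X | MemX P X} (baseRM P v Z) := by
  intro Z hZ X Y hX hY _ _ hXY
  refine csInf_le_csInf (baseRM_set_bddBelow hv hZ hY) (baseRM_set_nonempty hZ hX) ?_
  intro m hm
  have h1 : vSD P Set.univ v (fun ω => X ω + m) (fun ω => Y ω + m) :=
    hA X Y hX hY m hXY
  have hXm : MemX P (fun ω => X ω + m) := by
    obtain ⟨C, hC⟩ := hX.2
    refine ⟨hX.1.add_const m, C + |m|, ?_⟩
    filter_upwards [hC] with ω h
    calc |X ω + m| ≤ |X ω| + |m| := abs_add_le _ _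
      _ ≤ C + |m| := by linarith
  exact vSD_trans_bounded hXm hm h1

/-- (b) → (c) -/
lemma BtoC (hP : Atomless P) (hv : IsUtility univ v)
    (hB : ∀ Z : Ω → ℝ, MemX P Z →
      VSDConsistent P Set.univ v {X | MemX P X} (baseRM P v Z)) :
    ∃ k : ℝ, ∀ x : ℝ, RA v x = k := by
  obtain ⟨t, htm, -, htpos, htlt⟩ := hP univ MeasurableSet.univ (by simp)
  rw [measure_univ] at htlt
  set lam := (P t).toReal with hlam
  have hPt_ne_top : P t ≠ ⊤ := (lt_of_lt_of_le htlt le_top).ne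
  have hl0 : 0 < lam := ENNReal.toReal_pos htpos.ne' hPt_ne_top
  have hl1 : lam < 1 := by
    have := (ENNReal.toReal_lt_toReal hPt_ne_top (by simp : (1:ℝ≥0∞) ≠ ⊤)).mpr htlt
    simpa using this
  refine pratt hv hl0 hl1 ?_
  intro a b c m hc
  by_contra hcon
  push_neg at hcon
  -- construct the counterexample
  set X : Ω → ℝ := t.piecewise (fun _ => a) (fun _ => b) with hX
  have hXmeas : Measurable X := Measurable.piecewise htm measurable_const measurable_const
  have hXbd : ∀ᵐ ω ∂P, |X ω| ≤ max |a| |b| := by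
    refine ae_of_all _ fun ω => ?_
    by_cases hω : ω ∈ t <;> simp [hX, Set.piecewise, hω, le_max_left, le_max_right]
  have hXX : MemX P X := ⟨hXmeas, max |a| |b|, hXbd⟩
  set Y : Ω → ℝ := fun _ => c with hY
  have hYY : MemX P Y := ⟨measurable_const, |c|, ae_of_all _ fun ω => le_refl _⟩
  set Z : Ω → ℝ := fun ω => X ω + m with hZ
  have hZZ : MemX P Z := by
    refine ⟨hXmeas.add_const m, max |a| |b| + |m|, ?_⟩
    filter_upwards [hXbd] with ω h
    calc |X ω + m| ≤ |X ω| + |m| := abs_add_le _ _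
      _ ≤ max |a| |b| + |m| := by linarith
  -- X ≤_vSD Y
  have hXY : vSD P Set.univ v X Y := by
    intro u hu hR hiX hiY
    have hEX : ∫ ω, u (X ω) ∂P = lam * u a + (1 - lam) * u b := by
      rw [hX]
      exact integral_two_point htm a b u
    have hEY : ∫ ω, u (Y ω) ∂P = u c := by simp [hY]
    rw [hEX, hEY]
    exact key_lemma hu hv (fun x => hR x trivial) hl0.le hl1.le (le_of_eq hc.symm)
  -- integrability facts for v
  have hivZ : Integrable (fun ω => v (Z ω)) P := by
    obtain ⟨C, hC⟩ := hZZ.2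
    exact integrable_comp hv.cont hZZ.1 hC
  have hivX : Integrable (fun ω => v (X ω)) P := by
    obtain ⟨C, hC⟩ := hXX.2
    exact integrable_comp hv.cont hXX.1 hC
  have hivY : Integrable (fun ω => v (Y ω)) P := by
    exact integrable_const (v c)
  -- the expectation of v(Z)
  have hEvZ : ∫ ω, v (Z ω) ∂P = lam * v (a + m) + (1 - lam) * v (b + m) := by
    have : (fun ω => v (Z ω)) = fun ω => (fun x => v (x + m)) (X ω) := by
      funext ω; simp [hZ]
    rw [this, hX]
    exact integral_two_point htm a b (fun x => v (x + m))
  -- consistency applied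
  have hcons := hB Z hZZ X Y hXX hYY
    ⟨hXmeas, ae_of_all _ fun _ => trivial, hivX⟩
    ⟨measurable_const, ae_of_all _ fun _ => trivial, hivY⟩ hXY
  -- baseRM Z X ≤ m
  have hle : baseRM P v Z X ≤ m := by
    refine csInf_le (baseRM_set_bddBelow hv hZZ hXX) ?_
    show vSD P Set.univ v Z (fun ω => X ω + m)
    exact vSD_refl Z
  -- find δ with v (c + m + δ) < E
  set E := lam * v (a + m) + (1 - lam) * v (b + m) with hE
  have hopen : IsOpen (v ⁻¹' Iio E) := isOpen_Iio.preimage hv.cont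
  have hmem : c + m ∈ v ⁻¹' Iio E := by simpa [hE] using hcon
  obtain ⟨δ, hδpos, hball⟩ := Metric.isOpen_iff.mp hopen (c + m) hmem
  have hδmem : v (c + m + δ / 2) < E := by
    have : c + m + δ / 2 ∈ Metric.ball (c + m) δ := by
      rw [Metric.mem_ball, Real.dist_eq]
      rw [abs_of_nonneg (by linarith)]
      · linarith
    exact hball this
  -- baseRM Z Y ≥ m + δ/2
  have hge : m + δ / 2 ≤ baseRM P v Z Y := by
    refine le_csInf (baseRM_set_nonempty hZZ hYY) ?_
    intro m' hm'
    have hm'' : vSD P Set.univ v Z (fun ω => c + m') := hm'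
    have hint : Integrable (fun ω => v ((fun ω => c + m') ω)) P := integrable_const _
    have := hm'' v hv (fun x _ => le_rfl) hivZ hint
    rw [hEvZ] at this
    have hle2 : E ≤ v (c + m') := by
      simpa [hE] using this
    have : v (c + m + δ / 2) < v (c + m') := lt_of_lt_of_le hδmem hle2
    have hlt : c + m + δ / 2 < c + m' := by
      by_contra hcon2
      push_neg at hcon2
      exact absurd this (not_lt.mpr (hv.mono.monotone hcon2))
    linarith
  linarith

end F


end Lemmas

/-- For a threshold utility `v ∈ 𝒰(ℝ)` the following are
equivalent: (a) the `v`-SD order is invariant under additive translations on `𝒳`;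
(b) all base risk measures `ρ_{Z,v}`, `Z ∈ 𝒳`, are `v`-SD-consistent;
(c) `R_v^A` is constant. -/
theorem statement11 (P : Measure Ω) [IsProbabilityMeasure P] (hP : Atomless P)
    (v : ℝ → ℝ) (hv : IsUtility Set.univ v) :
    ((∀ X Y : Ω → ℝ, MemX P X → MemX P Y → ∀ m : ℝ,
        vSD P Set.univ v X Y →
          vSD P Set.univ v (fun ω => X ω + m) (fun ω => Y ω + m)) ↔
      (∀ Z : Ω → ℝ, MemX P Z →
        VSDConsistent P Set.univ v {X | MemX P X} (baseRM P v Z))) ∧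
    ((∀ Z : Ω → ℝ, MemX P Z →
        VSDConsistent P Set.univ v {X | MemX P X} (baseRM P v Z)) ↔
      (∃ k : ℝ, ∀ x : ℝ, RA v x = k)) := by
  constructor
  · exact ⟨fun hA => AtoB hv hA, fun hB => CtoA hv (BtoC hP hv hB)⟩
  · exact ⟨fun hB => BtoC hP hv hB, fun hC => AtoB hv (CtoA hv hC)⟩

end Paper
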